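/- arXiv:2102.07945 — 3 statements merged into one kernel-verified Lean document; each statement's English description precedes it below -/
import Mathlib

section
/- Let w be a submodular function on a finite set V with w(∅) = 0 and base polytope B. Let x ∈ R^V take unique values a_1 > a_2 > ... > a_m on the sets A_1, ..., A_m partitioning V. Then ρ ∈ B maximizes ρ^T x over B if and only if ρ(A_1 ∪ ... ∪ A_i) = w(A_1 ∪ ... ∪ A_i) for all i = 1, ..., m. -/
lemma abel_aux (b s : ℕ → ℝ) (m : ℕ) :
    ∑ n ∈ Finset.range m, b n * (s (n+1) - s n)
      = ∑ n ∈ Finset.range m, (b n - b (n+1)) * s (n+1) + b m * s m - b 0 * s 0 := by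
  induction m with
  | zero => simp
  | succ m ih => rw [Finset.sum_range_succ, Finset.sum_range_succ, ih]; ring

lemma tight_union_inter {V : Type*} [DecidableEq V] {w : Finset V → ℝ} {ρ : V → ℝ}
    (hsub : ∀ A B : Finset V, w (A ∪ B) + w (A ∩ B) ≤ w A + w B)
    (hρ : ∀ S : Finset V, ∑ v ∈ S, ρ v ≤ w S)
    {S T : Finset V} (hS : ∑ v ∈ S, ρ v = w S) (hT : ∑ v ∈ T, ρ v = w T) :
    (∑ v ∈ S ∪ T, ρ v = w (S ∪ T)) ∧ (∑ v ∈ S ∩ T, ρ v = w (S ∩ T)) := by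
  have h1 := hρ (S ∪ T)
  have h2 := hρ (S ∩ T)
  have h3 := hsub S T
  have h4 : ∑ v ∈ S ∪ T, ρ v + ∑ v ∈ S ∩ T, ρ v = ∑ v ∈ S, ρ v + ∑ v ∈ T, ρ v :=
    Finset.sum_union_inter
  constructor <;> linarith

lemma mem_inf_id {V : Type*} [Fintype V] [DecidableEq V] (𝒮 : Finset (Finset V)) (v : V) :
    v ∈ 𝒮.inf id ↔ ∀ S ∈ 𝒮, v ∈ S := by
  induction 𝒮 using Finset.induction_on with
  | empty => simp [Finset.top_eq_univ]
  | @insert S 𝒮 hS ih => simp [Finset.inf_insert, Finset.inf_eq_inter, Finset.mem_inter, ih]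

lemma tight_inf {V : Type*} [Fintype V] [DecidableEq V] {w : Finset V → ℝ} {ρ : V → ℝ}
    (hsub : ∀ A B : Finset V, w (A ∪ B) + w (A ∩ B) ≤ w A + w B)
    (hρ : ∀ S : Finset V, ∑ v ∈ S, ρ v ≤ w S) (hV : ∑ v, ρ v = w Finset.univ)
    (𝒮 : Finset (Finset V)) (h : ∀ S ∈ 𝒮, ∑ v ∈ S, ρ v = w S) :
    ∑ v ∈ 𝒮.inf id, ρ v = w (𝒮.inf id) := by
  induction 𝒮 using Finset.induction_on with
  | empty => simpa [Finset.top_eq_univ] using hV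
  | @insert S 𝒮 hS ih =>
    rw [Finset.inf_insert]
    have h1 := h S (Finset.mem_insert_self _ _)
    have h2 := ih (fun T hT => h T (Finset.mem_insert_of_mem hT))
    have := tight_union_inter hsub hρ h1 h2
    simpa [Finset.inf_eq_inter, id] using this.2

lemma tight_sup {V : Type*} [Fintype V] [DecidableEq V] {w : Finset V → ℝ} {ρ : V → ℝ}
    (hsub : ∀ A B : Finset V, w (A ∪ B) + w (A ∩ B) ≤ w A + w B)
    (hρ : ∀ S : Finset V, ∑ v ∈ S, ρ v ≤ w S) (h0 : w ∅ = 0)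
    (𝒮 : Finset (Finset V)) (h : ∀ S ∈ 𝒮, ∑ v ∈ S, ρ v = w S) :
    ∑ v ∈ 𝒮.sup id, ρ v = w (𝒮.sup id) := by
  induction 𝒮 using Finset.induction_on with
  | empty => simpa [Finset.bot_eq_empty] using h0.symm
  | @insert S 𝒮 hS ih =>
    rw [Finset.sup_insert]
    have h1 := h S (Finset.mem_insert_self _ _)
    have h2 := ih (fun T hT => h T (Finset.mem_insert_of_mem hT))
    have := tight_union_inter hsub hρ h1 h2
    simpa [Finset.sup_eq_union, id] using this.1

/-- Characterization of maximizers of the support function of a base polytope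
(Proposition 4.2 in Bach): `ρ ∈ B` maximizes `ρᵀx` iff it is tight on every
prefix `A_1 ∪ ⋯ ∪ A_i` of the decreasing level-set partition of `x`. -/
theorem stmt3 {V : Type*} [Fintype V] [DecidableEq V] (w : Finset V → ℝ)
    (hsub : ∀ A B : Finset V, w (A ∪ B) + w (A ∩ B) ≤ w A + w B) (h0 : w ∅ = 0)
    (x : V → ℝ) (m : ℕ) (a : Fin m → ℝ) (A : Fin m → Finset V)
    (ha : StrictAnti a)
    (hne : ∀ i, (A i).Nonempty)
    (hpart : ∀ v : V, ∃! i, v ∈ A i)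
    (hx : ∀ i, ∀ v ∈ A i, x v = a i)
    (ρ : V → ℝ) (hρ : ∀ S : Finset V, ∑ v ∈ S, ρ v ≤ w S)
    (hρV : ∑ v, ρ v = w Finset.univ) :
    ((∀ ρ' : V → ℝ, (∀ S : Finset V, ∑ v ∈ S, ρ' v ≤ w S) →
        (∑ v, ρ' v = w Finset.univ) →
        ∑ v, ρ' v * x v ≤ ∑ v, ρ v * x v)
      ↔ ∀ i : Fin m,
          ∑ v ∈ (Finset.univ.filter (· ≤ i)).biUnion A, ρ v =
            w ((Finset.univ.filter (· ≤ i)).biUnion A)) := by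
  classical
  set P : Fin m → Finset V := fun i => (Finset.univ.filter (· ≤ i)).biUnion A with hPdef
  have hdisj : ∀ i j : Fin m, i ≠ j → Disjoint (A i) (A j) := by
    intro i j hij
    rw [Finset.disjoint_left]
    intro v hvi hvj
    obtain ⟨k, _, hk⟩ := hpart v
    exact hij ((hk i hvi).trans (hk j hvj).symm)
  set A' : ℕ → Finset V := fun n => if h : n < m then A ⟨n, h⟩ else ∅ with hA'def
  set a' : ℕ → ℝ := fun n => if h : n < m then a ⟨n, h⟩ else 0 with ha'def
  set Q : ℕ → Finset V := fun n => (Finset.range n).biUnion A' with hQdef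
  have hA'disj : ∀ sN : Finset ℕ, (↑sN : Set ℕ).PairwiseDisjoint A' := by
    intro sN p hp q hq hpq
    simp only [Function.onFun, hA'def]
    split_ifs with h1 h2 h2
    · exact hdisj _ _ (by simpa [Fin.ext_iff] using hpq)
    · simp
    · simp
    · simp
  have hQsum : ∀ (f : V → ℝ) (n : ℕ),
      ∑ v ∈ Q n, f v = ∑ j ∈ Finset.range n, ∑ v ∈ A' j, f v := by
    intro f n
    simp only [hQdef]
    exact Finset.sum_biUnion (hA'disj _)
  have hQm : Q m = Finset.univ := by
    ext v
    simp only [hQdef, Finset.mem_biUnion, Finset.mem_range, Finset.mem_univ, iff_true]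
    obtain ⟨k, hk, _⟩ := hpart v
    exact ⟨k.val, k.isLt, by simpa [hA'def, k.isLt] using hk⟩
  have hQP : ∀ i : Fin m, Q (i.val + 1) = P i := by
    intro i
    ext v
    simp only [hQdef, hPdef, Finset.mem_biUnion, Finset.mem_range, Finset.mem_filter,
      Finset.mem_univ, true_and]
    constructor
    · rintro ⟨j, hj, hv⟩
      have hjm : j < m := lt_of_lt_of_le hj (Nat.succ_le_of_lt i.isLt)
      refine ⟨⟨j, hjm⟩, ?_, ?_⟩
      · exact Fin.mk_le_mk.mpr (Nat.lt_succ_iff.mp hj)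
      · simpa [hA'def, hjm] using hv
    · rintro ⟨j, hj, hv⟩
      exact ⟨j.val, Nat.lt_succ_of_le hj, by simpa [hA'def, j.isLt] using hv⟩
  have hobj : ∀ f : V → ℝ,
      ∑ v, f v * x v = ∑ n ∈ Finset.range m, a' n * ∑ v ∈ A' n, f v := by
    intro f
    have h1 : ∑ v, f v * x v = ∑ v ∈ Q m, f v * x v := by rw [hQm]
    rw [h1, hQsum (fun v => f v * x v) m]
    refine Finset.sum_congr rfl fun n hn => ?_
    have hnm : n < m := Finset.mem_range.mp hn
    rw [Finset.mul_sum]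
    refine Finset.sum_congr rfl fun v hv => ?_
    have hvA : v ∈ A ⟨n, hnm⟩ := by simpa [hA'def, hnm] using hv
    rw [hx _ v hvA, mul_comm]
    simp [ha'def, hnm]
  constructor
  · -- maximizer → tight on prefixes
    intro hmax i
    have hle := hρ (P i)
    by_contra hneq
    have hlt : ∑ v ∈ P i, ρ v < w (P i) := lt_of_le_of_ne hle hneq
    set Tight : Finset V → Prop := fun S => ∑ v ∈ S, ρ v = w S with hTdef
    set Tu : V → Finset V := fun u =>
      (Finset.univ.filter (fun S : Finset V => Tight S ∧ u ∈ S)).inf id with hTudef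
    have hTu_tight : ∀ u, Tight (Tu u) := by
      intro u
      exact tight_inf hsub hρ hρV _ (fun S hS => (Finset.mem_filter.mp hS).2.1)
    have hTu_mem : ∀ u, u ∈ Tu u := by
      intro u
      rw [hTudef]
      exact (mem_inf_id _ u).mpr (fun S hS => (Finset.mem_filter.mp hS).2.2)
    have hTu_min : ∀ u S, Tight S → u ∈ S → Tu u ⊆ S := by
      intro u S hS huS
      have h := Finset.inf_le (f := id)
        (Finset.mem_filter.mpr ⟨Finset.mem_univ S, ⟨hS, huS⟩⟩ :
          S ∈ Finset.univ.filter (fun T : Finset V => Tight T ∧ u ∈ T))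
      simpa [hTudef] using h
    by_cases hcase : ∀ u ∈ P i, Tu u ⊆ P i
    · -- P i is a union of tight sets, hence tight: contradiction
      have hU : Tight ((P i).sup Tu) := by
        have himg : (P i).sup Tu = ((P i).image Tu).sup id := by
          rw [Finset.sup_image, Function.id_comp]
        rw [himg]
        exact tight_sup hsub hρ h0 _ (by
          intro S hS
          obtain ⟨u, _, rfl⟩ := Finset.mem_image.mp hS
          exact hTu_tight u)
      have hUP : (P i).sup Tu = P i := by
        apply le_antisymm
        · exact Finset.sup_le fun u hu => hcase u hu
        · intro u hu
          exact Finset.le_sup (f := Tu) hu (hTu_mem u)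
      rw [hUP] at hU
      exact hneq hU
    · push_neg at hcase
      obtain ⟨u, hu, hnotsub⟩ := hcase
      obtain ⟨v, hvTu, hvP⟩ := Finset.not_subset.mp hnotsub
      have huv : u ≠ v := fun h => hvP (h ▸ hu)
      set F : Finset (Finset V) :=
        Finset.univ.filter (fun S : Finset V => u ∈ S ∧ v ∉ S) with hFdef
      have hFne : F.Nonempty := by
        refine ⟨{u}, ?_⟩
        simp [hFdef, Finset.mem_singleton, huv, Ne.symm huv]
      set ε : ℝ := F.inf' hFne (fun S => w S - ∑ t ∈ S, ρ t) with hεdef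
      have hεpos : 0 < ε := by
        rw [hεdef, Finset.lt_inf'_iff]
        intro S hS
        obtain ⟨huS, hvS⟩ := (Finset.mem_filter.mp hS).2
        have hSle := hρ S
        rcases lt_or_eq_of_le hSle with h | h
        · linarith
        · exact absurd (hTu_min u S h huS hvTu) hvS
      set ρ' : V → ℝ := fun t => ρ t + (if t = u then ε else 0) - (if t = v then ε else 0)
        with hρ'def
      have hsum : ∀ S : Finset V, ∑ t ∈ S, ρ' t =
          ∑ t ∈ S, ρ t + (if u ∈ S then ε else 0) - (if v ∈ S then ε else 0) := by
        intro S
        simp only [hρ'def, Finset.sum_sub_distrib, Finset.sum_add_distrib]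
        rw [Finset.sum_ite_eq' S u (fun _ => ε), Finset.sum_ite_eq' S v (fun _ => ε)]
      have hρ'B : ∀ S : Finset V, ∑ t ∈ S, ρ' t ≤ w S := by
        intro S
        rw [hsum S]
        by_cases huS : u ∈ S <;> by_cases hvS : v ∈ S <;>
          simp only [huS, hvS, if_true, if_false]
        · have := hρ S; linarith
        · have hSF : S ∈ F := Finset.mem_filter.mpr ⟨Finset.mem_univ _, huS, hvS⟩
          have := Finset.inf'_le (fun S => w S - ∑ t ∈ S, ρ t) hSF
          rw [← hεdef] at this
          linarith
        · have := hρ S; linarith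
        · have := hρ S; linarith
      have hρ'V : ∑ t, ρ' t = w Finset.univ := by
        rw [hsum Finset.univ]
        simp [hρV]
      have hobj' : ∑ t, ρ' t * x t = ∑ t, ρ t * x t + ε * x u - ε * x v := by
        simp only [hρ'def, sub_mul, add_mul, ite_mul, zero_mul,
          Finset.sum_sub_distrib, Finset.sum_add_distrib]
        rw [Finset.sum_ite_eq' Finset.univ u (fun t => ε * x t),
          Finset.sum_ite_eq' Finset.univ v (fun t => ε * x t)]
        simp
      -- x u > x v
      obtain ⟨j, hjfil, hujA⟩ := Finset.mem_biUnion.mp hu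
      have hji : j ≤ i := (Finset.mem_filter.mp hjfil).2
      obtain ⟨k, hk, _⟩ := hpart v
      have hki : ¬ k ≤ i := by
        intro hki
        exact hvP (Finset.mem_biUnion.mpr
          ⟨k, Finset.mem_filter.mpr ⟨Finset.mem_univ _, hki⟩, hk⟩)
      have hjk : j < k := lt_of_le_of_lt hji (not_le.mp hki)
      have hxu : x u = a j := hx j u hujA
      have hxv : x v = a k := hx k v hk
      have hax : x v < x u := by rw [hxu, hxv]; exact ha hjk
      have hcontra := hmax ρ' hρ'B hρ'V
      rw [hobj'] at hcontra
      nlinarith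
  · -- tight on prefixes → maximizer
    intro htight ρ' hρ'B hρ'V
    set g : V → ℝ := fun v => ρ v - ρ' v with hgdef
    set s : ℕ → ℝ := fun n => ∑ v ∈ Q n, g v with hsdef
    have hs0 : s 0 = 0 := by simp [hsdef, hQdef]
    have hsm : s m = 0 := by
      simp only [hsdef, hQm, hgdef]
      rw [Finset.sum_sub_distrib, hρV, hρ'V]
      ring
    have hstep : ∀ n, s (n+1) - s n = ∑ v ∈ A' n, g v := by
      intro n
      simp only [hsdef]
      rw [hQsum g (n+1), hQsum g n, Finset.sum_range_succ]
      ring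
    have hsnn : ∀ n, n < m → 0 ≤ s (n+1) := by
      intro n hnm
      have h1 := htight ⟨n, hnm⟩
      have hq := hQP ⟨n, hnm⟩
      have h2 := hρ'B (P ⟨n, hnm⟩)
      simp only [hsdef, hgdef]
      rw [Finset.sum_sub_distrib]
      simp only at hq
      rw [hq]
      simp only [hPdef] at h2 ⊢
      linarith [h1]
    have key : ∑ v, g v * x v = ∑ n ∈ Finset.range m, (a' n - a' (n+1)) * s (n+1) := by
      rw [hobj g]
      calc ∑ n ∈ Finset.range m, a' n * ∑ v ∈ A' n, g v
          = ∑ n ∈ Finset.range m, a' n * (s (n+1) - s n) :=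
            Finset.sum_congr rfl fun n _ => by rw [hstep]
        _ = _ := by rw [abel_aux, hs0, hsm]; ring
    have hterm : ∀ n ∈ Finset.range m, 0 ≤ (a' n - a' (n+1)) * s (n+1) := by
      intro n hn
      have hnm : n < m := Finset.mem_range.mp hn
      by_cases hEq : n + 1 = m
      · rw [hEq, hsm, mul_zero]
      · have hn1 : n + 1 < m := by omega
        have hcoef : 0 < a' n - a' (n+1) := by
          simp only [ha'def, dif_pos hnm, dif_pos hn1]
          have := ha (show (⟨n, hnm⟩ : Fin m) < ⟨n+1, hn1⟩ from by simp [Fin.lt_def])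
          linarith
        exact mul_nonneg hcoef.le (hsnn n hnm)
    have hnn : 0 ≤ ∑ v, g v * x v := key ▸ Finset.sum_nonneg hterm
    have hsplit : ∑ v, g v * x v = ∑ v, ρ v * x v - ∑ v, ρ' v * x v := by
      simp [hgdef, sub_mul, Finset.sum_sub_distrib]
    linarith
end

section
/- Consider the problem of minimizing ∑_{e ∈ E_v} ϑ_e |ξ_e − r_e|^p over ξ ∈ R^{E_v} subject to Δ_v − ∑_{e ∈ E_v} ϑ_e ξ_e ≤ d_v, where p ≥ 2, ϑ_e > 0, d_v = ∑_{e∈E_v} ϑ_e. The optimal solution is ξ_e* = r_e + d_v^{−1} · max(Δ_v − ∑_{e'∈E_v} ϑ_{e'} r_{e'} − d_v, 0) for every e ∈ E_v. -/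
/-- Closed-form solution of the per-node `s`-subproblem: the minimizer of
`∑_e ϑ_e |ξ_e − r_e|^p` subject to `Δ − ∑_e ϑ_e ξ_e ≤ d` (with `d = ∑_e ϑ_e`)
is `ξ_e = r_e + d⁻¹ [Δ − ∑ ϑ r − d]₊`. -/
theorem stmt7 {E : Type*} [Fintype E] [Nonempty E]
    (ϑ r : E → ℝ) (hϑ : ∀ e, 0 < ϑ e) (Δ dv : ℝ)
    (hd : dv = ∑ e, ϑ e) (p : ℝ) (hp : 2 ≤ p)
    (ξ : E → ℝ)
    (hξ : ξ = fun e => r e + dv⁻¹ * max (Δ - (∑ e', ϑ e' * r e') - dv) 0) :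
    (Δ - ∑ e, ϑ e * ξ e ≤ dv) ∧
    ∀ ξ' : E → ℝ, (Δ - ∑ e, ϑ e * ξ' e ≤ dv) →
      ∑ e, ϑ e * |ξ e - r e| ^ p ≤ ∑ e, ϑ e * |ξ' e - r e| ^ p := by
  have hdv : 0 < dv := hd ▸ Finset.sum_pos (fun e _ => hϑ e) Finset.univ_nonempty
  set S : ℝ := ∑ e', ϑ e' * r e' with hS
  set c : ℝ := max (Δ - S - dv) 0 with hc
  have hc0 : 0 ≤ c := le_max_right _ _
  have hsum : ∑ e, ϑ e * ξ e = S + c := by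
    subst hξ
    simp only [mul_add, Finset.sum_add_distrib]
    rw [← Finset.sum_mul, ← hd]
    field_simp
    rfl
  constructor
  · rw [hsum]; linarith [le_max_left (Δ - S - dv) 0]
  · intro ξ' hfeas
    set x : E → ℝ := fun e => ξ' e - r e with hx
    have hxsum : c ≤ ∑ e, ϑ e * |x e| := by
      have h1 : ∑ e, ϑ e * x e ≤ ∑ e, ϑ e * |x e| :=
        Finset.sum_le_sum fun e _ => by
          exact mul_le_mul_of_nonneg_left (le_abs_self _) (hϑ e).le
      have h2 : Δ - S - dv ≤ ∑ e, ϑ e * x e := by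
        have : ∑ e, ϑ e * x e = (∑ e, ϑ e * ξ' e) - S := by
          simp [hx, mul_sub, Finset.sum_sub_distrib, hS]
        linarith
      have h3 : (0:ℝ) ≤ ∑ e, ϑ e * |x e| :=
        Finset.sum_nonneg fun e _ => mul_nonneg (hϑ e).le (abs_nonneg _)
      exact max_le (h2.trans h1) h3
    -- LHS value
    have hξval : ∀ e, ξ e - r e = dv⁻¹ * c := by intro e; rw [hξ]; ring
    have hLHS : ∑ e, ϑ e * |ξ e - r e| ^ p = dv * (dv⁻¹ * c) ^ p := by
      simp only [hξval, abs_of_nonneg (mul_nonneg (inv_nonneg.2 hdv.le) hc0)]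
      rw [← Finset.sum_mul, ← hd]
    -- Jensen
    have hw : ∀ e ∈ Finset.univ, (0:ℝ) ≤ ϑ e / dv := fun e _ => div_nonneg (hϑ e).le hdv.le
    have hw1 : ∑ e, ϑ e / dv = 1 := by
      rw [← Finset.sum_div, ← hd, div_self hdv.ne']
    have hjen := Real.rpow_arith_mean_le_arith_mean_rpow Finset.univ
      (fun e => ϑ e / dv) (fun e => |x e|) hw hw1
      (fun e _ => abs_nonneg _) (le_trans one_le_two hp)
    have hmean : dv⁻¹ * c ≤ ∑ e, ϑ e / dv * |x e| := by
      rw [Finset.sum_congr rfl (fun e _ => by rw [div_mul_eq_mul_div]), ← Finset.sum_div]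
      rw [inv_mul_eq_div]
      gcongr
    have hpow : (dv⁻¹ * c) ^ p ≤ (∑ e, ϑ e / dv * |x e|) ^ p :=
      Real.rpow_le_rpow (by positivity) hmean (by linarith)
    rw [hLHS]
    calc dv * (dv⁻¹ * c) ^ p ≤ dv * ∑ e, ϑ e / dv * |x e| ^ p := by
          exact mul_le_mul_of_nonneg_left (hpow.trans hjen) hdv.le
      _ = ∑ e, ϑ e * |x e| ^ p := by
          rw [Finset.mul_sum]
          exact Finset.sum_congr rfl fun e _ => by field_simp
      _ = ∑ e, ϑ e * |ξ' e - r e| ^ p := rfl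
end

section
/- Projection structure for unit cut-cost: consider min over (φ, r) with φ ≥ 0 and r ∈ φ·B of (1/2)φ² + (1/(2σ))‖s − r‖₂², where B is the base polytope of the unit cut-cost on a finite set e (w(S) = 1 for ∅ ≠ S ⊊ e, w(∅) = w(e) = 0). At the unique optimum, there exist thresholds a ≥ b such that r_v = s_v − σa for v with s_v ≥ σa, r_v = s_v − σb for v with s_v ≤ σb, and r_v = 0 otherwise; moreover ∑_v r_v = 0. -/
lemma aux_limit (A C ε₀ : ℝ) (hε₀ : 0 < ε₀)
    (h : ∀ ε : ℝ, 0 < ε → ε ≤ ε₀ → 0 ≤ A*ε + C*ε^2) : 0 ≤ A := by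
  by_contra hA
  push_neg at hA
  set ε := min ε₀ (-A/(|C|+1)) with hε
  have hD : (0:ℝ) < |C| + 1 := by positivity
  have h1 : 0 < -A/(|C|+1) := div_pos (by linarith) hD
  have hεpos : 0 < ε := lt_min hε₀ h1
  have h0 := h ε hεpos (min_le_left _ _)
  have hle : ε ≤ -A/(|C|+1) := min_le_right _ _
  have hle' : ε * (|C|+1) ≤ -A := (le_div_iff₀ hD).mp hle
  have h2 : C*ε^2 ≤ (|C|) * ε^2 := by nlinarith [le_abs_self C, sq_nonneg ε]
  have h3 : A + (|C|) * ε ≤ -ε := by nlinarith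
  nlinarith [mul_le_mul_of_nonneg_left h3 hεpos.le]

lemma sum_split {α : Type*} [Fintype α] [DecidableEq α] (u v : α) (huv : u ≠ v) (g : α → ℝ) :
    ∑ x, g x = g u + g v + ∑ x ∈ (Finset.univ.erase u).erase v, g x := by
  have hv : v ∈ Finset.univ.erase u := Finset.mem_erase.2 ⟨huv.symm, Finset.mem_univ v⟩
  rw [← Finset.add_sum_erase _ g (Finset.mem_univ u), ← Finset.add_sum_erase _ g hv]
  ring

lemma feas_aux {α : Type*} [Fintype α] [DecidableEq α] (w : Finset α → ℝ)
    (hw : ∀ S : Finset α, w S = if S = ∅ ∨ S = Finset.univ then 0 else 1)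
    (φ' : ℝ) (hφ' : 0 < φ') (r' : α → ℝ) (hsum : ∑ x, r' x = 0)
    (hmax : ∑ x, max (r' x) 0 ≤ φ') :
    ∀ S : Finset α, ∑ x ∈ S, (φ'⁻¹ * r' x) ≤ w S := by
  intro S
  rw [hw, ← Finset.mul_sum]
  split_ifs with h
  · rcases h with h | h
    · simp [h]
    · rw [h, hsum, mul_zero]
  · have h1 : ∑ x ∈ S, r' x ≤ ∑ x ∈ S, max (r' x) 0 :=
      Finset.sum_le_sum (fun i _ => le_max_left _ _)
    have h2 : ∑ x ∈ S, max (r' x) 0 ≤ ∑ x, max (r' x) 0 :=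
      Finset.sum_le_sum_of_subset_of_nonneg (Finset.subset_univ S)
        (fun i _ _ => le_max_right _ _)
    calc φ'⁻¹ * ∑ x ∈ S, r' x ≤ φ'⁻¹ * φ' := by
          apply mul_le_mul_of_nonneg_left (by linarith) (inv_nonneg.2 hφ'.le)
      _ = 1 := inv_mul_cancel₀ hφ'.ne'

lemma max_sum_split {α : Type*} [Fintype α] [DecidableEq α] (u v : α) (huv : u ≠ v)
    (r : α → ℝ) (ε : ℝ) :
    ∑ x, max (if x = u then r x + ε else if x = v then r x - ε else r x) 0
      = max (r u + ε) 0 + max (r v - ε) 0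
        + (∑ x, max (r x) 0 - max (r u) 0 - max (r v) 0) := by
  have h2 := sum_split u v huv (fun x => max (r x) 0)
  rw [sum_split u v huv
      (fun x => max (if x = u then r x + ε else if x = v then r x - ε else r x) 0), h2]
  have hcongr : ∑ x ∈ (Finset.univ.erase u).erase v,
      max (if x = u then r x + ε else if x = v then r x - ε else r x) 0
      = ∑ x ∈ (Finset.univ.erase u).erase v, max (r x) 0 := by
    apply Finset.sum_congr rfl
    intro x hx
    have hxv : x ≠ v := (Finset.mem_erase.1 hx).1
    have hxu : x ≠ u := (Finset.mem_erase.1 (Finset.mem_erase.1 hx).2).1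
    simp [hxu, hxv]
  rw [hcongr]
  simp [huv.symm]

/-- Threshold structure of the optimal projection for the unit cut-cost: at the
optimum of `min (1/2)φ² + (1/(2σ))‖s − r‖²` over `φ ≥ 0`, `r ∈ φ·B`, there are
thresholds `a ≥ b` such that `r_v = s_v − σa` where `s_v ≥ σa`,
`r_v = s_v − σb` where `s_v ≤ σb`, and `r_v = 0` otherwise; moreover
`∑_v r_v = 0`. -/
theorem stmt16 {α : Type*} [Fintype α] [DecidableEq α]
    (hcard : 2 ≤ Fintype.card α)
    (σ : ℝ) (hσ : 0 < σ) (s : α → ℝ)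
    (w : Finset α → ℝ)
    (hw : ∀ S : Finset α, w S = if S = ∅ ∨ S = Finset.univ then 0 else 1)
    (φ : ℝ) (r ρ : α → ℝ) (hφ : 0 ≤ φ)
    (hρ : ∀ S : Finset α, ∑ v ∈ S, ρ v ≤ w S) (hρe : ∑ v, ρ v = 0)
    (hr : r = φ • ρ)
    (hopt : ∀ (φ' : ℝ) (r' ρ' : α → ℝ), 0 ≤ φ' →
      (∀ S : Finset α, ∑ v ∈ S, ρ' v ≤ w S) → (∑ v, ρ' v = 0) → r' = φ' • ρ' →
      (1/2) * φ ^ 2 + (1/(2*σ)) * ∑ v, (s v - r v) ^ 2 ≤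
        (1/2) * φ' ^ 2 + (1/(2*σ)) * ∑ v, (s v - r' v) ^ 2) :
    (∑ v, r v = 0) ∧ ∃ a b : ℝ, b ≤ a ∧ ∀ v : α,
      (σ * a ≤ s v → r v = s v - σ * a) ∧
      (s v ≤ σ * b → r v = s v - σ * b) ∧
      (σ * b < s v → s v < σ * a → r v = 0) := by
  have hσ0 : σ ≠ 0 := hσ.ne'
  have hsum0 : ∑ v, r v = 0 := by
    rw [hr]
    simp only [Pi.smul_apply, smul_eq_mul, ← Finset.mul_sum, hρe, mul_zero]
  refine ⟨hsum0, ?_⟩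
  have hne : (Finset.univ : Finset α).Nonempty := by
    rw [Finset.univ_nonempty_iff]
    exact Fintype.card_pos_iff.mp (by omega)
  by_cases hr0 : ∀ v, r v = 0
  · refine ⟨(Finset.univ.sup' hne s)/σ, (Finset.univ.inf' hne s)/σ, ?_, ?_⟩
    · obtain ⟨x, hx⟩ := id hne
      have h1 : Finset.univ.inf' hne s ≤ s x := Finset.inf'_le s hx
      have h2 : s x ≤ Finset.univ.sup' hne s := Finset.le_sup' s hx
      have h3 : Finset.univ.inf' hne s ≤ Finset.univ.sup' hne s := le_trans h1 h2
      gcongr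
    · intro v
      have hM : σ * ((Finset.univ.sup' hne s)/σ) = Finset.univ.sup' hne s := by field_simp
      have hm : σ * ((Finset.univ.inf' hne s)/σ) = Finset.univ.inf' hne s := by field_simp
      rw [hM, hm, hr0 v]
      refine ⟨fun h => ?_, fun h => ?_, fun _ _ => rfl⟩
      · have := Finset.le_sup' s (Finset.mem_univ v); linarith
      · have := Finset.inf'_le s (Finset.mem_univ v); linarith
  · push_neg at hr0
    have hexpos : ∃ u, 0 < r u := by
      by_contra hc; push_neg at hc
      obtain ⟨x, hx⟩ := hr0
      exact hx ((Finset.sum_eq_zero_iff_of_nonpos (fun y _ => hc y)).mp hsum0 x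
        (Finset.mem_univ x))
    have hexneg : ∃ u, r u < 0 := by
      by_contra hc; push_neg at hc
      obtain ⟨x, hx⟩ := hr0
      exact hx ((Finset.sum_eq_zero_iff_of_nonneg (fun y _ => hc y)).mp hsum0 x
        (Finset.mem_univ x))
    obtain ⟨u₀, hu₀⟩ := hexpos
    obtain ⟨v₀, hv₀⟩ := hexneg
    have hposle : ∑ x, max (r x) 0 ≤ φ := by
      set P : Finset α := Finset.univ.filter (fun v => 0 < r v) with hP
      have hPne : ¬ P = ∅ := by
        intro h
        have hm : u₀ ∈ P := Finset.mem_filter.2 ⟨Finset.mem_univ _, hu₀⟩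
        simp [h] at hm
      have hPnu : ¬ P = Finset.univ := by
        intro h
        have hm : v₀ ∈ P := h ▸ Finset.mem_univ v₀
        have := (Finset.mem_filter.1 hm).2; linarith
      have hwP := hρ P
      rw [hw P, if_neg (by tauto)] at hwP
      have e1 : ∑ x, max (r x) 0 = ∑ x ∈ P, r x := by
        rw [Finset.sum_filter]
        apply Finset.sum_congr rfl
        intro x _
        rcases lt_or_ge 0 (r x) with h | h
        · rw [if_pos h, max_eq_left h.le]
        · rw [if_neg (not_lt.2 h), max_eq_right h]
      rw [e1, hr]
      simp only [Pi.smul_apply, smul_eq_mul, ← Finset.mul_sum]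
      calc φ * ∑ x ∈ P, ρ x ≤ φ * 1 := mul_le_mul_of_nonneg_left hwP hφ
        _ = φ := mul_one φ
    have hφpos : 0 < φ := by
      have h1 : max (r u₀) 0 ≤ ∑ x, max (r x) 0 :=
        Finset.single_le_sum (fun x _ => le_max_right (r x) 0) (Finset.mem_univ u₀)
      have h2 : 0 < max (r u₀) 0 := lt_max_iff.2 (Or.inl hu₀)
      linarith
    have key : ∀ u v : α, u ≠ v → ∀ t ε₀ : ℝ, 0 < ε₀ →
        (∀ ε : ℝ, 0 < ε → ε ≤ ε₀ →
          0 < φ + t*ε ∧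
          ∑ x, max (if x = u then r x + ε else if x = v then r x - ε else r x) 0
            ≤ φ + t*ε) →
        0 ≤ t*φ + ((s v - r v) - (s u - r u))/σ := by
      intro u v huv t ε₀ hε₀ hfeas
      apply aux_limit _ (t^2/2 + 1/σ) ε₀ hε₀
      intro ε hε hεε₀
      obtain ⟨hφ', hmax⟩ := hfeas ε hε hεε₀
      set r' : α → ℝ := fun x => if x = u then r x + ε else if x = v then r x - ε else r x
        with hr'def
      have h1 : r' u = r u + ε := by simp [hr'def]
      have h2 : r' v = r v - ε := by simp [hr'def, huv.symm]
      have h3 : ∀ x ∈ (Finset.univ.erase u).erase v, r' x = r x := by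
        intro x hx
        have hxv : x ≠ v := (Finset.mem_erase.1 hx).1
        have hxu : x ≠ u := (Finset.mem_erase.1 (Finset.mem_erase.1 hx).2).1
        simp [hr'def, hxu, hxv]
      have hmax' : ∑ x, max (r' x) 0 ≤ φ + t*ε := hmax
      have hsum' : ∑ x, r' x = 0 := by
        rw [sum_split u v huv r', Finset.sum_congr rfl h3, h1, h2]
        have hs := sum_split u v huv r
        linarith [hsum0, hs]
      have hρ'feas := feas_aux w hw (φ + t*ε) hφ' r' hsum' hmax'
      have hrsmul : r' = (φ + t*ε) • ((φ + t*ε)⁻¹ • r') := by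
        rw [smul_smul, mul_inv_cancel₀ hφ'.ne', one_smul]
      have hρ'sum : ∑ x, ((φ + t*ε)⁻¹ • r') x = 0 := by
        simp only [Pi.smul_apply, smul_eq_mul, ← Finset.mul_sum, hsum', mul_zero]
      have H := hopt (φ + t*ε) r' ((φ + t*ε)⁻¹ • r') hφ'.le
        (fun S => hρ'feas S) hρ'sum hrsmul
      have e1 : ∑ x, (s x - r' x)^2
          = ∑ x, (s x - r x)^2 + (2*ε*((s v - r v) - (s u - r u)) + 2*ε^2) := by
        rw [sum_split u v huv (fun x => (s x - r' x)^2),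
            sum_split u v huv (fun x => (s x - r x)^2)]
        have h4 : ∑ x ∈ (Finset.univ.erase u).erase v, (s x - r' x)^2
            = ∑ x ∈ (Finset.univ.erase u).erase v, (s x - r x)^2 :=
          Finset.sum_congr rfl (fun x hx => by rw [h3 x hx])
        rw [h4, h1, h2]; ring
      have e2 : (t*φ + ((s v - r v) - (s u - r u))/σ)*ε + (t^2/2 + 1/σ)*ε^2
          = ((1/2)*(φ + t*ε)^2 + (1/(2*σ)) * ∑ x, (s x - r' x)^2)
            - ((1/2)*φ^2 + (1/(2*σ)) * ∑ x, (s x - r x)^2) := by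
        rw [e1]; field_simp; ring
      linarith [H, e2.ge, e2.le]
    have keyNeg : ∀ u v : α, u ≠ v → r u < 0 → r v ≤ 0 → s u - r u ≤ s v - r v := by
      intro u v huv hu hv
      have h := key u v huv 0 (-r u) (by linarith) (by
        intro ε hε hεle
        refine ⟨by rw [zero_mul, add_zero]; exact hφpos, ?_⟩
        rw [max_sum_split u v huv r ε, max_eq_right (by linarith : r u + ε ≤ 0),
          max_eq_right (by linarith : r v - ε ≤ 0), max_eq_right hu.le, max_eq_right hv]
        linarith [hposle])
      have h2 : 0 ≤ σ * (0*φ + ((s v - r v) - (s u - r u))/σ) := mul_nonneg hσ.le h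
      have h3 : σ * (0*φ + ((s v - r v) - (s u - r u))/σ)
          = (s v - r v) - (s u - r u) := by field_simp; ring
      rw [h3] at h2; linarith
    have keyPos : ∀ u v : α, u ≠ v → 0 ≤ r u → 0 < r v → s u - r u ≤ s v - r v := by
      intro u v huv hu hv
      have h := key u v huv 0 (r v) hv (by
        intro ε hε hεle
        refine ⟨by rw [zero_mul, add_zero]; exact hφpos, ?_⟩
        rw [max_sum_split u v huv r ε, max_eq_left (by linarith : 0 ≤ r u + ε),
          max_eq_left (by linarith : 0 ≤ r v - ε), max_eq_left hu, max_eq_left hv.le]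
        linarith [hposle])
      have h2 : 0 ≤ σ * (0*φ + ((s v - r v) - (s u - r u))/σ) := mul_nonneg hσ.le h
      have h3 : σ * (0*φ + ((s v - r v) - (s u - r u))/σ)
          = (s v - r v) - (s u - r u) := by field_simp; ring
      rw [h3] at h2; linarith
    have hne' : v₀ ≠ u₀ := by intro h; rw [h] at hv₀; linarith
    have hcross : σ * φ ≤ (s u₀ - r u₀) - (s v₀ - r v₀) := by
      have h := key v₀ u₀ hne' (-1) (min (-r v₀) (min (r u₀) (φ/2)))
        (lt_min (by linarith) (lt_min hu₀ (by linarith))) (by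
        intro ε hε hεle
        have hε1 : ε ≤ -r v₀ := le_trans hεle (min_le_left _ _)
        have hε2 : ε ≤ r u₀ := le_trans hεle (le_trans (min_le_right _ _) (min_le_left _ _))
        have hε3 : ε ≤ φ/2 := le_trans hεle (le_trans (min_le_right _ _) (min_le_right _ _))
        refine ⟨by nlinarith, ?_⟩
        rw [max_sum_split v₀ u₀ hne' r ε, max_eq_right (by linarith : r v₀ + ε ≤ 0),
          max_eq_left (by linarith : 0 ≤ r u₀ - ε), max_eq_right hv₀.le,
          max_eq_left hu₀.le]
        nlinarith [hposle])
      have h2 : 0 ≤ σ * ((-1)*φ + ((s u₀ - r u₀) - (s v₀ - r v₀))/σ) := mul_nonneg hσ.le h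
      have h3 : σ * ((-1)*φ + ((s u₀ - r u₀) - (s v₀ - r v₀))/σ)
          = (s u₀ - r u₀) - (s v₀ - r v₀) - σ*φ := by field_simp; ring
      rw [h3] at h2; linarith
    set A := s u₀ - r u₀ with hAdef
    set B := s v₀ - r v₀ with hBdef
    have hBA : B ≤ A := by nlinarith [mul_nonneg hσ.le hφ]
    have hdpos : ∀ x, 0 < r x → s x - r x = A := by
      intro x hx
      by_cases h : x = u₀
      · rw [h]
      · exact le_antisymm (keyPos x u₀ h hx.le hu₀) (keyPos u₀ x (Ne.symm h) hu₀.le hx)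
    have hdneg : ∀ x, r x < 0 → s x - r x = B := by
      intro x hx
      by_cases h : x = v₀
      · rw [h]
      · exact le_antisymm (keyNeg x v₀ h hx hv₀.le) (keyNeg v₀ x (Ne.symm h) hv₀ hx.le)
    refine ⟨A/σ, B/σ, by gcongr, ?_⟩
    intro v
    have hσA : σ * (A/σ) = A := by field_simp
    have hσB : σ * (B/σ) = B := by field_simp
    rw [hσA, hσB]
    rcases lt_trichotomy (r v) 0 with h | h | h
    · have hd := hdneg v h
      have hsv : s v < B := by linarith
      exact ⟨fun hc => absurd hc (by linarith), fun _ => by linarith,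
        fun hc _ => absurd hc (by linarith)⟩
    · have hvu : v ≠ u₀ := by intro hh; rw [hh] at h; linarith
      have hvv : v₀ ≠ v := by intro hh; rw [hh] at hv₀; linarith
      have h1 : s v - r v ≤ A := keyPos v u₀ hvu (le_of_eq h.symm) hu₀
      have h2 : B ≤ s v - r v := keyNeg v₀ v hvv hv₀ (le_of_eq h)
      exact ⟨fun hc => by rw [h]; linarith, fun hc => by rw [h]; linarith, fun _ _ => h⟩
    · have hd := hdpos v h
      have hsv : A < s v := by linarith
      exact ⟨fun _ => by linarith, fun hc => absurd hc (by linarith),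
        fun _ hc => absurd hc (by linarith)⟩
end
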